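/- Let d ≥ 1 and n ≥ 1 be integers. The union of the Kuhn simplices k(v,π), taken over all admissible pairs (v,π) for n that additionally satisfy v_d = 0, equals the base {x ∈ S^n : 0 ≤ x_d ≤ 1} of S^n. -/

import Mathlib

/-- The right `d`-simplex `S^α = {x ∈ ℝ^d : α ≥ x_1 ≥ x_2 ≥ … ≥ x_d ≥ 0}`
(coordinates indexed by `Fin d`, in order). -/
def Sset (d : ℕ) (α : ℝ) : Set (Fin d → ℝ) :=
  {x | (∀ i : Fin d, 0 ≤ x i ∧ x i ≤ α) ∧ ∀ i j : Fin d, i ≤ j → x j ≤ x i}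

/-- The Kuhn simplex `k(v,π) = {x : 1 ≥ (x−v)_{π(1)} ≥ … ≥ (x−v)_{π(d)} ≥ 0}`. -/
def kuhn (d : ℕ) (v : Fin d → ℝ) (π : Equiv.Perm (Fin d)) : Set (Fin d → ℝ) :=
  {x | (∀ i : Fin d, 0 ≤ x (π i) - v (π i) ∧ x (π i) - v (π i) ≤ 1) ∧
       ∀ i j : Fin d, i ≤ j → x (π j) - v (π j) ≤ x (π i) - v (π i)}

/-- `(v,π)` with `v ∈ ℤ^d` is admissible for `m` if `v ∈ S^{m-1}` and whenever
`v_j = v_{j+1}`, `j` precedes `j+1` in `π`, i.e. `π⁻¹(j) < π⁻¹(j+1)`. -/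
def admissible (d m : ℕ) (v : Fin d → ℤ) (π : Equiv.Perm (Fin d)) : Prop :=
  ((fun i => (v i : ℝ)) ∈ Sset d ((m : ℝ) - 1)) ∧
  ∀ (j : Fin d) (h : (j : ℕ) + 1 < d),
    v j = v ⟨(j : ℕ) + 1, h⟩ → π.symm j < π.symm ⟨(j : ℕ) + 1, h⟩

/-- In an admissible pair, if `v i = v j` for `i ≤ j`, then `π.symm i ≤ π.symm j`. -/
lemma admissible_symm_le (d m : ℕ) (v : Fin d → ℤ) (π : Equiv.Perm (Fin d))
    (ha : admissible d m v π) :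
    ∀ (k : ℕ) (i j : Fin d), (j : ℕ) = (i : ℕ) + k → v i = v j → π.symm i ≤ π.symm j := by
  intro k
  induction k with
  | zero =>
    intro i j hij _
    have : i = j := Fin.ext (by omega)
    simp [this]
  | succ k ih =>
    intro i j hij hv
    have hjd : (i : ℕ) + k + 1 < d := by omega
    set j' : Fin d := ⟨(i : ℕ) + k, by omega⟩ with hj'
    have hjd' : (j' : ℕ) + 1 < d := by simp [hj']; omega
    have hjeq : j = ⟨(j' : ℕ) + 1, hjd'⟩ := Fin.ext (by simp [hj']; omega)
    have hij' : i ≤ j' := by rw [Fin.le_def]; show (i:ℕ) ≤ (i:ℕ) + k; omega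
    have hj'j : j' ≤ j := by rw [Fin.le_def]; show (i:ℕ) + k ≤ (j:ℕ); omega
    have hmono := ha.1.2
    have h1 : (v j : ℝ) ≤ v j' := hmono j' j hj'j
    have h2 : (v j' : ℝ) ≤ v i := hmono i j' hij'
    have h1' : v j ≤ v j' := by exact_mod_cast h1
    have h2' : v j' ≤ v i := by exact_mod_cast h2
    have hv1 : v i = v j' := by omega
    have hv2 : v j' = v j := by omega
    have hle := ih i j' (by rfl) hv1
    have hlt := ha.2 j' hjd' (hjeq ▸ hv2)
    rw [hjeq]
    exact le_trans hle (le_of_lt hlt)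
/-- the union of the Kuhn simplices over all admissible pairs for `n`
with `v_d = 0` equals the base `{x ∈ S^n : 0 ≤ x_d ≤ 1}`. -/
theorem iUnion_admissible_base_kuhn_eq_base (d n : ℕ) (hd : 1 ≤ d) (hn : 1 ≤ n) :
    ⋃ (v : Fin d → ℤ) (π : Equiv.Perm (Fin d))
      (_ : admissible d n v π) (_ : v ⟨d - 1, by omega⟩ = 0),
      kuhn d (fun i => (v i : ℝ)) π
      = {x ∈ Sset d (n : ℝ) | 0 ≤ x ⟨d - 1, by omega⟩ ∧ x ⟨d - 1, by omega⟩ ≤ 1} := by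
  ext x
  simp only [Set.mem_iUnion, Set.mem_setOf_eq]
  constructor
  · rintro ⟨v, π, ha, hv0, hx⟩
    have hbnd := ha.1.1
    have hvmono := ha.1.2
    obtain ⟨hk1, hk2⟩ := hx
    have ht : ∀ i : Fin d, 0 ≤ x i - (v i : ℝ) ∧ x i - (v i : ℝ) ≤ 1 := by
      intro i
      have := hk1 (π.symm i)
      rwa [Equiv.apply_symm_apply] at this
    have hxmono : ∀ i j : Fin d, i ≤ j → x j ≤ x i := by
      intro i j hij
      have hvji : (v j : ℝ) ≤ v i := hvmono i j hij
      rcases eq_or_lt_of_le (show v j ≤ v i by exact_mod_cast hvji) with heq | hlt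
      · have hsym : π.symm i ≤ π.symm j :=
          admissible_symm_le d n v π ha ((j : ℕ) - i) i j (by omega) heq.symm
        have h := hk2 (π.symm i) (π.symm j) hsym
        rw [Equiv.apply_symm_apply, Equiv.apply_symm_apply] at h
        have hc : (v j : ℝ) = v i := by exact_mod_cast heq
        linarith
      · have : (v j : ℝ) + 1 ≤ v i := by exact_mod_cast hlt
        have h1 := (ht j).2
        have h2 := (ht i).1
        linarith
    refine ⟨⟨fun i => ?_, hxmono⟩, ?_, ?_⟩
    · have h1 := (ht i).1
      have h2 := (ht i).2
      have h3 := (hbnd i).1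
      have h4 := (hbnd i).2
      simp only at h3 h4
      constructor <;> linarith
    · have := (ht ⟨d - 1, by omega⟩).1
      rw [hv0] at this; simpa using this
    · have := (ht ⟨d - 1, by omega⟩).2
      rw [hv0] at this; simpa using this
  · rintro ⟨⟨hbnd, hxmono⟩, hx0, hx1⟩
    set v : Fin d → ℤ := fun i => max (⌈x i⌉ - 1) 0 with hv
    set g : Fin d → ℝ := fun i => -(x i - (v i : ℝ)) with hg
    set π : Equiv.Perm (Fin d) := Tuple.sort g with hπ
    have hsort := (Tuple.eq_sort_iff.mp hπ.symm.symm : _)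
    obtain ⟨hgmono, hties⟩ := Tuple.eq_sort_iff.mp (rfl : Tuple.sort g = Tuple.sort g)
    -- basic bounds on t
    have ht0 : ∀ i, 0 ≤ x i - (v i : ℝ) := by
      intro i
      have h1 : (⌈x i⌉ : ℝ) - 1 ≤ x i := by
        have := Int.ceil_lt_add_one (x i); linarith
      have h2 : (0 : ℝ) ≤ x i := (hbnd i).1
      have : ((v i : ℤ) : ℝ) ≤ x i := by
        rw [hv]; push_cast [Int.cast_max]
        exact max_le (by linarith) h2
      linarith
    have ht1 : ∀ i, x i - (v i : ℝ) ≤ 1 := by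
      intro i
      have h1 : x i ≤ (⌈x i⌉ : ℝ) := Int.le_ceil _
      have : x i ≤ (v i : ℝ) + 1 := by
        rw [hv]; push_cast [Int.cast_max]
        have : (⌈x i⌉ : ℝ) ≤ max ((⌈x i⌉ : ℝ) - 1) 0 + 1 := by
          rcases le_max_iff.mpr (Or.inl (le_refl ((⌈x i⌉:ℝ) - 1))) with h
          linarith [le_max_left ((⌈x i⌉:ℝ) - 1) (0:ℝ)]
        linarith
      linarith
    -- v is antitone
    have hvmono : ∀ i j : Fin d, i ≤ j → v j ≤ v i := by
      intro i j hij
      have : x j ≤ x i := hxmono i j hij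
      have : ⌈x j⌉ ≤ ⌈x i⌉ := Int.ceil_le_ceil this
      simp only [hv]
      exact max_le_max (by omega) le_rfl
    -- admissibility
    have hadm : admissible d n v π := by
      constructor
      · constructor
        · intro i
          constructor
          · simp only [hv]; push_cast [Int.cast_max]
            exact le_max_right _ _
          · have : ⌈x i⌉ ≤ n := Int.ceil_le.mpr (by exact_mod_cast (hbnd i).2)
            have hvn : v i ≤ (n : ℤ) - 1 := by
              simp only [hv]; exact max_le (by omega) (by omega)
            show ((v i : ℝ)) ≤ (n : ℝ) - 1
            calc ((v i : ℝ)) ≤ ((n : ℤ) - 1 : ℤ) := by exact_mod_cast hvn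
              _ = (n : ℝ) - 1 := by push_cast; ring
        · intro i j hij
          show ((v j : ℝ)) ≤ (v i : ℝ)
          exact_mod_cast hvmono i j hij
      · intro j h hvj
        set j' : Fin d := ⟨(j : ℕ) + 1, h⟩
        by_contra hcon
        push_neg at hcon
        rcases eq_or_lt_of_le hcon with heq | hlt
        · have : j' = j := by
            have := congrArg π heq
            simpa using this
          exact absurd (congrArg Fin.val this) (by show ¬ ((j:ℕ) + 1 = j); omega)
        · -- π.symm j' < π.symm j
          have h1 : g (π (π.symm j')) ≤ g (π (π.symm j)) := hgmono hlt.le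
          simp only [Equiv.apply_symm_apply] at h1
          -- g j' ≤ g j, i.e. -(t j') ≤ -(t j), t j ≤ t j'
          have hxj : x j' ≤ x j := hxmono j j' (by simp [Fin.le_def, j'])
          have h2 : g j ≤ g j' := by
            simp only [hg, hvj]
            simp only [neg_sub]
            linarith
          have heq2 : g j' = g j := le_antisymm h1 h2
          have := hties _ _ hlt (by rw [← hπ]; simpa using heq2)
          rw [← hπ] at this; simp only [Equiv.apply_symm_apply] at this
          have : (j : ℕ) + 1 < j := by exact_mod_cast this
          omega
    have hvd : v ⟨d - 1, by omega⟩ = 0 := by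
      have : ⌈x ⟨d - 1, by omega⟩⌉ ≤ 1 := Int.ceil_le.mpr (by simpa using hx1)
      simp only [hv]
      omega
    refine ⟨v, π, hadm, hvd, ?_, ?_⟩
    · intro i
      exact ⟨ht0 _, ht1 _⟩
    · intro i j hij
      have := hgmono hij
      simp only [hg, Function.comp_apply] at this
      linarith
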